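/- Let 0 < α < 1, δ > 0 and η ≤ δ. For any function Y : (0,T] → ℝ, the restricted seminorm [Y] := sup over pairs 0<s<t≤T with |t−s| ≤ s of |Y_t − Y_s|/(s^{η−δ}|t−s|^α) is equivalent to the full seminorm sup over all pairs 0<s<t≤T of |Y_t − Y_s|/(s^{η−δ}|t−s|^α): the restricted seminorm is bounded by the full one, and the full one is bounded by C·[Y] for a constant C depending only on α, η, δ. -/

import Mathlib

open Set ENNReal

/-- Full singular seminorm: sup over all pairs `0 < s < t ≤ T`. -/
noncomputable def fullSemi (T α δ η : ℝ) (Y : ℝ → ℝ) : ℝ≥0∞ :=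
  ⨆ s : ℝ, ⨆ t : ℝ, ⨆ _ : 0 < s ∧ s < t ∧ t ≤ T,
    ENNReal.ofReal (|Y t - Y s| / (s ^ (η - δ) * (t - s) ^ α))

/-- Restricted singular seminorm: sup over pairs with additionally `t - s ≤ s`. -/
noncomputable def restrSemi (T α δ η : ℝ) (Y : ℝ → ℝ) : ℝ≥0∞ :=
  ⨆ s : ℝ, ⨆ t : ℝ, ⨆ _ : 0 < s ∧ s < t ∧ t ≤ T ∧ t - s ≤ s,
    ENNReal.ofReal (|Y t - Y s| / (s ^ (η - δ) * (t - s) ^ α))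

theorem restricted_full_seminorm_equivalence
    (α δ η : ℝ) (hα0 : 0 < α) (hα1 : α < 1) (hδ : 0 < δ) (hηδ : η ≤ δ) :
    ∃ C : ℝ, 0 < C ∧ ∀ T : ℝ, 0 < T → ∀ Y : ℝ → ℝ,
      restrSemi T α δ η Y ≤ fullSemi T α δ η Y ∧
      fullSemi T α δ η Y ≤ ENNReal.ofReal C * restrSemi T α δ η Y := by
  set r : ℝ := (2 : ℝ) ^ (-α) with hr_def
  have hr0 : 0 < r := Real.rpow_pos_of_pos (by norm_num) _
  have hr1 : r < 1 := by
    have : (2 : ℝ) ^ (-α) < (2 : ℝ) ^ (0 : ℝ) :=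
      Real.rpow_lt_rpow_of_exponent_lt (by norm_num) (by linarith)
    simpa using this
  set K : ℝ := (1 - r)⁻¹ with hK_def
  have h1r : (0:ℝ) < 1 - r := by linarith
  have hK0 : 0 < K := inv_pos.mpr h1r
  have hK1 : 1 ≤ K := by
    rw [hK_def, le_inv_comm₀ (by norm_num) (by linarith)]
    linarith
  have hKr : 1 + K * r = K := by
    have h := mul_inv_cancel₀ (ne_of_gt h1r)
    rw [hK_def]
    nlinarith [h]
  refine ⟨K, hK0, fun T hT Y => ?_⟩
  have hηδ' : η - δ ≤ 0 := by linarith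
  constructor
  · refine iSup_le fun s => iSup_le fun t => iSup_le fun h => ?_
    exact le_iSup_of_le s (le_iSup_of_le t (le_iSup_of_le ⟨h.1, h.2.1, h.2.2.1⟩ le_rfl))
  · set M : ℝ≥0∞ := restrSemi T α δ η Y with hM_def
    by_cases hMtop : M = ⊤
    · rw [hMtop, ENNReal.mul_top (by simp [ENNReal.ofReal_eq_zero]; linarith)]
      exact le_top
    set M' : ℝ := M.toReal with hM'_def
    have hM'0 : 0 ≤ M' := ENNReal.toReal_nonneg
    have hMeq : M = ENNReal.ofReal M' := (ENNReal.ofReal_toReal hMtop).symm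
    -- restricted pairs bound
    have hrestr : ∀ s t : ℝ, 0 < s → s < t → t ≤ T → t - s ≤ s →
        |Y t - Y s| ≤ M' * (s ^ (η - δ) * (t - s) ^ α) := by
      intro s t hs hst htT hts
      have hD : 0 < s ^ (η - δ) * (t - s) ^ α := by
        have h1 : 0 < s ^ (η - δ) := Real.rpow_pos_of_pos hs _
        have h2 : 0 < (t - s) ^ α := Real.rpow_pos_of_pos (by linarith) _
        positivity
      have hle : ENNReal.ofReal (|Y t - Y s| / (s ^ (η - δ) * (t - s) ^ α)) ≤ M :=
        le_iSup_of_le s (le_iSup_of_le t (le_iSup_of_le ⟨hs, hst, htT, hts⟩ le_rfl))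
      rw [hMeq, ENNReal.ofReal_le_ofReal_iff hM'0] at hle
      calc |Y t - Y s| = |Y t - Y s| / (s ^ (η - δ) * (t - s) ^ α) *
            (s ^ (η - δ) * (t - s) ^ α) := (div_mul_cancel₀ _ hD.ne').symm
        _ ≤ M' * (s ^ (η - δ) * (t - s) ^ α) := by
            exact mul_le_mul_of_nonneg_right hle hD.le
    -- main chaining estimate
    have key : ∀ n : ℕ, ∀ s t : ℝ, 0 < s → s < t → t ≤ T → t ≤ 2 ^ n * s →
        |Y t - Y s| ≤ K * M' * (s ^ (η - δ) * (t - s) ^ α) := by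
      intro n
      induction n with
      | zero =>
        intro s t hs hst htT hle
        simp only [pow_zero, one_mul] at hle
        linarith
      | succ n ih =>
        intro s t hs hst htT hle
        by_cases h2 : t ≤ 2 * s
        · have h := hrestr s t hs hst htT (by linarith)
          have hD : 0 ≤ s ^ (η - δ) * (t - s) ^ α := by
            have h1 : (0:ℝ) ≤ s ^ (η - δ) := (Real.rpow_pos_of_pos hs _).le
            have h2' : (0:ℝ) ≤ (t - s) ^ α := Real.rpow_nonneg (by linarith) _
            positivity
          nlinarith [mul_nonneg hM'0 hD]
        · push_neg at h2
          set u : ℝ := t / 2 with hu_def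
          have hsu : s < u := by rw [hu_def]; linarith
          have hut : u < t := by rw [hu_def]; linarith
          have hu0 : 0 < u := lt_trans hs hsu
          -- step from u to t
          have hstep : |Y t - Y u| ≤ M' * (u ^ (η - δ) * (t - u) ^ α) :=
            hrestr u t hu0 hut htT (by rw [hu_def]; linarith)
          -- induction from s to u
          have hun : u ≤ 2 ^ n * s := by
            rw [hu_def]
            have : t ≤ 2 ^ (n + 1) * s := hle
            rw [pow_succ] at this
            linarith
          have hind : |Y u - Y s| ≤ K * M' * (s ^ (η - δ) * (u - s) ^ α) :=
            ih s u hs hsu (le_of_lt (lt_of_lt_of_le hut htT)) hun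
          -- bounds on pieces
          have hsηδ : u ^ (η - δ) ≤ s ^ (η - δ) :=
            Real.rpow_le_rpow_of_nonpos hs hsu.le hηδ'
          have htu : (t - u) ^ α ≤ (t - s) ^ α := by
            apply Real.rpow_le_rpow (by linarith) (by rw [hu_def]; linarith) hα0.le
          have hus : (u - s) ^ α ≤ r * (t - s) ^ α := by
            have h1 : u - s ≤ (t - s) / 2 := by rw [hu_def]; linarith
            have h2' : (u - s) ^ α ≤ ((t - s) / 2) ^ α :=
              Real.rpow_le_rpow (by linarith) h1 hα0.le
            have h3 : ((t - s) / 2) ^ α = (t - s) ^ α * r := by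
              rw [Real.div_rpow (by linarith) (by norm_num), hr_def,
                Real.rpow_neg (by norm_num)]
              field_simp
            rw [h3] at h2'
            linarith [h2']
          have hsp : (0:ℝ) < s ^ (η - δ) := Real.rpow_pos_of_pos hs _
          have htsp : (0:ℝ) ≤ (t - s) ^ α := Real.rpow_nonneg (by linarith) _
          have hup : (0:ℝ) ≤ u ^ (η - δ) := (Real.rpow_pos_of_pos hu0 _).le
          have htup : (0:ℝ) ≤ (t - u) ^ α := Real.rpow_nonneg (by linarith) _
          have hstep2 : |Y t - Y u| ≤ M' * (s ^ (η - δ) * (t - s) ^ α) := by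
            refine le_trans hstep ?_
            apply mul_le_mul_of_nonneg_left _ hM'0
            calc u ^ (η - δ) * (t - u) ^ α ≤ s ^ (η - δ) * (t - u) ^ α :=
                  mul_le_mul_of_nonneg_right hsηδ htup
              _ ≤ s ^ (η - δ) * (t - s) ^ α :=
                  mul_le_mul_of_nonneg_left htu hsp.le
          have hind2 : |Y u - Y s| ≤ K * M' * (s ^ (η - δ) * (r * (t - s) ^ α)) := by
            refine le_trans hind ?_
            apply mul_le_mul_of_nonneg_left _ (by positivity)
            exact mul_le_mul_of_nonneg_left hus hsp.le
          have htri : |Y t - Y s| ≤ |Y t - Y u| + |Y u - Y s| := by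
            have := abs_sub_le (Y t) (Y u) (Y s)
            linarith [this]
          have : |Y t - Y s| ≤ (1 + K * r) * M' * (s ^ (η - δ) * (t - s) ^ α) := by
            nlinarith [htri, hstep2, hind2]
          rw [hKr] at this
          exact this
    -- conclude
    refine iSup_le fun s => iSup_le fun t => iSup_le fun h => ?_
    obtain ⟨hs, hst, htT⟩ := h
    obtain ⟨n, hn⟩ := pow_unbounded_of_one_lt (t / s) (by norm_num : (1:ℝ) < 2)
    have htn : t ≤ 2 ^ n * s := by
      rw [div_lt_iff₀ hs] at hn
      linarith
    have hbound := key n s t hs hst htT htn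
    have hD : 0 < s ^ (η - δ) * (t - s) ^ α := by
      have h1 : 0 < s ^ (η - δ) := Real.rpow_pos_of_pos hs _
      have h2 : 0 < (t - s) ^ α := Real.rpow_pos_of_pos (by linarith) _
      positivity
    have hratio : |Y t - Y s| / (s ^ (η - δ) * (t - s) ^ α) ≤ K * M' :=
      (div_le_iff₀ hD).mpr hbound
    calc ENNReal.ofReal (|Y t - Y s| / (s ^ (η - δ) * (t - s) ^ α))
        ≤ ENNReal.ofReal (K * M') := ENNReal.ofReal_le_ofReal hratio
      _ = ENNReal.ofReal K * ENNReal.ofReal M' := ENNReal.ofReal_mul hK0.le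
      _ = ENNReal.ofReal K * M := by rw [← hMeq]
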